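/- Fix N_i > 0 for i = 1,…,n and partitions {I₁,…,I_ℓ} and {J₁,…,J_m} of {1,…,n} such that each I_p is contained in some J_q. Let g_p := 1 − ∑_{i∈I_p} (x_i/N_i)^d for p = 1,…,ℓ, h_q := 1 − ∑_{i∈J_q} (x_i/N_i)^d for q = 1,…,m, g := (g₁,…,g_ℓ), h := (h₁,…,h_m). For λ ∈ [0,∞)^ℓ define μ ∈ [0,∞)^m by μ_q := ∑_{p : I_p ⊆ J_q} λ_p, and set G(λ) := f − ∑_{p=1}^ℓ λ_p g_p and H(μ) := f − ∑_{q=1}^m μ_q h_q. Then G(λ)_gp ≤ H(μ)_gp for every λ ∈ [0,∞)^ℓ; consequently s(f,g) ≤ s(f,h). -/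

import Mathlib

open MvPolynomial Finset

noncomputable section

/-- `Finset.filter` with classical decidability. -/
def pfilter {β : Type*} (s : Finset β) (q : β → Prop) : Finset β :=
  @Finset.filter β q (fun _ => Classical.propDecidable _) s

/-- `|α| := α₁ + ⋯ + αₙ` for a multi-index `α`. -/
def adeg {n : ℕ} (α : Fin n →₀ ℕ) : ℕ := ∑ i, α i

/-- `Ω(p) := {α : |α| ≤ d, p_α ≠ 0, α ∉ {0, ε₁, …, εₙ}}`. -/
def OmegaSet {n : ℕ} (d : ℕ) (p : MvPolynomial (Fin n) ℝ) : Finset (Fin n →₀ ℕ) :=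
  pfilter p.support (fun α => adeg α ≤ d ∧ α ≠ 0 ∧ ∀ i, α ≠ Finsupp.single i d)

/-- `Δ(p) := {α ∈ Ω(p) : p_α x^α is not a square}`. -/
def DelSet {n : ℕ} (d : ℕ) (p : MvPolynomial (Fin n) ℝ) : Finset (Fin n →₀ ℕ) :=
  pfilter (OmegaSet d p)
    (fun α => ¬ IsSquare ((monomial α (p.coeff α)) : MvPolynomial (Fin n) ℝ))

/-- Feasibility for program (lw) for `p`. -/
def LwFeas {n : ℕ} (d : ℕ) (p : MvPolynomial (Fin n) ℝ)
    (z : (Fin n →₀ ℕ) → Fin n → ℝ) : Prop :=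
  (∀ α ∈ DelSet d p, ∀ i, 0 ≤ z α i ∧ (z α i = 0 ↔ α i = 0)) ∧
  (∀ i, ∑ α ∈ DelSet d p, z α i ≤ p.coeff (Finsupp.single i d)) ∧
  (∀ α ∈ DelSet d p, adeg α = d →
    ∏ i, (z α i / (α i : ℝ)) ^ (α i) = (p.coeff α / (d : ℝ)) ^ d)

/-- The objective function `v` of program (lw). -/
def lwObj {n : ℕ} (d : ℕ) (p : MvPolynomial (Fin n) ℝ)
    (z : (Fin n →₀ ℕ) → Fin n → ℝ) : ℝ :=
  ∑ α ∈ pfilter (DelSet d p) (fun α => adeg α < d),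
    ((d : ℝ) - (adeg α : ℝ)) *
      (((p.coeff α / (d : ℝ)) ^ d * ∏ i, ((α i : ℝ) / z α i) ^ (α i)) ^
        ((1 : ℝ) / ((d : ℝ) - (adeg α : ℝ))))

/-- `ρ(p) ∈ [0,∞]`, the infimum of `v` over the feasible set (`⊤` if infeasible). -/
def lwRho {n : ℕ} (d : ℕ) (p : MvPolynomial (Fin n) ℝ) : EReal :=
  sInf ((fun z => ((lwObj d p z : ℝ) : EReal)) '' {z | LwFeas d p z})

/-- `p_gp := p(0) − ρ(p) ∈ ℝ ∪ {−∞}`. -/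
def lwGp {n : ℕ} (d : ℕ) (p : MvPolynomial (Fin n) ℝ) : EReal :=
  ((eval (0 : Fin n → ℝ) p : ℝ) : EReal) - lwRho d p

/-- `G(λ) := f − ∑ⱼ λⱼ gⱼ`. -/
def polyG {n m : ℕ} (f : MvPolynomial (Fin n) ℝ) (g : Fin m → MvPolynomial (Fin n) ℝ)
    (lam : Fin m → ℝ) : MvPolynomial (Fin n) ℝ :=
  f - ∑ j, C (lam j) * g j

/-- `s(f,g) := sup{G(λ)_gp : λ ∈ [0,∞)^m}`. -/
def sBound {n m : ℕ} (d : ℕ) (f : MvPolynomial (Fin n) ℝ)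
    (g : Fin m → MvPolynomial (Fin n) ℝ) : EReal :=
  sSup ((fun lam => lwGp d (polyG f g lam)) '' {lam : Fin m → ℝ | ∀ j, 0 ≤ lam j})


lemma mem_pfilter {β : Type*} {s : Finset β} {q : β → Prop} {a : β} :
    a ∈ pfilter s q ↔ a ∈ s ∧ q a := by
  classical
  rw [pfilter, Finset.filter_congr_decidable, Finset.mem_filter]

lemma pfilter_eq {β : Type*} (s : Finset β) (q : β → Prop) [DecidablePred q] :
    pfilter s q = s.filter q := by
  rw [pfilter, Finset.filter_congr_decidable]

lemma coeff_comb_int {n l : ℕ} (d : ℕ) (c : Fin n → ℝ) (I : Fin l → Finset (Fin n))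
    (lam : Fin l → ℝ) (α : Fin n →₀ ℕ) (hα0 : α ≠ 0) (hαd : ∀ i, α ≠ Finsupp.single i d) :
    MvPolynomial.coeff α (∑ p, C (lam p) * (1 - ∑ i ∈ I p, C (c i) * X i ^ d)) = 0 := by
  classical
  have h1 : (0 : Fin n →₀ ℕ) ≠ α := Ne.symm hα0
  have h2 : ∀ i, Finsupp.single i d ≠ α := fun i => Ne.symm (hαd i)
  rw [coeff_sum]
  refine Finset.sum_eq_zero fun p _ => ?_
  simp [coeff_C_mul, coeff_sub, coeff_one, coeff_sum, coeff_X_pow, h1, h2]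

lemma coeff_comb_zero {n l : ℕ} (d : ℕ) (hd : d ≠ 0) (c : Fin n → ℝ)
    (I : Fin l → Finset (Fin n)) (lam : Fin l → ℝ) :
    MvPolynomial.coeff 0 (∑ p, C (lam p) * (1 - ∑ i ∈ I p, C (c i) * X i ^ d)) =
      ∑ p, lam p := by
  classical
  rw [coeff_sum]
  refine Finset.sum_congr rfl fun p _ => ?_
  have h2 : ∀ i : Fin n, Finsupp.single i d ≠ 0 := fun i => by
    simp [Finsupp.single_eq_zero, hd]
  simp [coeff_C_mul, coeff_sub, coeff_one, coeff_sum, coeff_X_pow, h2]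

lemma coeff_comb_single {n l : ℕ} (d : ℕ) (hd : d ≠ 0) (c : Fin n → ℝ)
    (I : Fin l → Finset (Fin n)) (lam : Fin l → ℝ) (i₀ : Fin n) :
    MvPolynomial.coeff (Finsupp.single i₀ d) (∑ p, C (lam p) * (1 - ∑ i ∈ I p, C (c i) * X i ^ d)) =
      -∑ p, if i₀ ∈ I p then lam p * c i₀ else 0 := by
  classical
  have h0 : (0 : Fin n →₀ ℕ) ≠ Finsupp.single i₀ d := by
    intro hcon
    exact hd (Finsupp.single_eq_zero.mp hcon.symm)
  rw [coeff_sum, ← Finset.sum_neg_distrib]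
  refine Finset.sum_congr rfl fun p _ => ?_
  simp only [coeff_C_mul, coeff_sub, coeff_one, coeff_sum, coeff_X_pow,
    Finsupp.single_left_inj hd, if_neg h0, mul_ite, mul_one, mul_zero,
    Finset.sum_ite_eq' (I p) i₀ c, zero_sub, mul_neg]

/-- Refining the partition can only decrease the bound: if `{I_p}` refines `{J_q}` and
`μ_q = ∑_{I_p ⊆ J_q} λ_p`, then `G(λ)_gp ≤ H(μ)_gp`, and consequently `s(f,g) ≤ s(f,h)`. -/
theorem stmt19 {n : ℕ} (hn : 1 ≤ n) (d : ℕ) (hd2 : 2 ≤ d) (hde : Even d)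
    (f : MvPolynomial (Fin n) ℝ) (hdf : f.totalDegree ≤ d)
    (N : Fin n → ℝ) (hN : ∀ i, 0 < N i)
    (l m : ℕ) (I : Fin l → Finset (Fin n)) (J : Fin m → Finset (Fin n))
    (hIne : ∀ p, (I p).Nonempty) (hJne : ∀ q, (J q).Nonempty)
    (hIdisj : ∀ p p', p ≠ p' → Disjoint (I p) (I p'))
    (hJdisj : ∀ q q', q ≠ q' → Disjoint (J q) (J q'))
    (hIcov : ∀ i : Fin n, ∃ p, i ∈ I p) (hJcov : ∀ i : Fin n, ∃ q, i ∈ J q)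
    (href : ∀ p, ∃ q, I p ⊆ J q)
    (g : Fin l → MvPolynomial (Fin n) ℝ)
    (hg : ∀ p, g p = 1 - ∑ i ∈ I p, C ((N i ^ d)⁻¹) * X i ^ d)
    (h : Fin m → MvPolynomial (Fin n) ℝ)
    (hh : ∀ q, h q = 1 - ∑ i ∈ J q, C ((N i ^ d)⁻¹) * X i ^ d) :
    (∀ lam : Fin l → ℝ, (∀ p, 0 ≤ lam p) →
      lwGp d (polyG f g lam) ≤
        lwGp d (polyG f h (fun q => ∑ p ∈ pfilter Finset.univ (fun p => I p ⊆ J q), lam p))) ∧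
    sBound d f g ≤ sBound d f h := by
  classical
  have hd0 : d ≠ 0 := by omega
  set c : Fin n → ℝ := fun i => (N i ^ d)⁻¹ with hcdef
  have hcpos : ∀ i, 0 ≤ c i := fun i => le_of_lt (by have := hN i; positivity)
  have huniq : ∀ (p : Fin l) (q q' : Fin m), I p ⊆ J q → I p ⊆ J q' → q = q' := by
    intro p q q' h1 h2
    by_contra hne
    obtain ⟨i, hi⟩ := hIne p
    exact Finset.disjoint_left.mp (hJdisj q q' hne) (h1 hi) (h2 hi)
  have huniqJ : ∀ (i : Fin n) (q q' : Fin m), i ∈ J q → i ∈ J q' → q = q' := by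
    intro i q q' h1 h2
    by_contra hne
    exact Finset.disjoint_left.mp (hJdisj q q' hne) h1 h2
  have main : ∀ lam : Fin l → ℝ, (∀ p, 0 ≤ lam p) →
      lwGp d (polyG f g lam) ≤
        lwGp d (polyG f h (fun q => ∑ p ∈ pfilter Finset.univ (fun p => I p ⊆ J q), lam p)) := by
    intro lam hlam
    set mu : Fin m → ℝ := fun q => ∑ p ∈ pfilter Finset.univ (fun p => I p ⊆ J q), lam p with hmu
    have hmu' : ∀ q, mu q = ∑ p, if I p ⊆ J q then lam p else 0 := by
      intro q
      rw [hmu]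
      simp only [pfilter_eq, Finset.sum_filter]
    have hmunn : ∀ q, 0 ≤ mu q := by
      intro q
      rw [hmu']
      refine Finset.sum_nonneg fun p _ => ?_
      split_ifs with hs
      · exact hlam p
      · exact le_refl 0
    set G := polyG f g lam with hG
    set H := polyG f h mu with hH
    have hGc : ∀ α, G.coeff α =
        f.coeff α - MvPolynomial.coeff α (∑ p, C (lam p) * (1 - ∑ i ∈ I p, C (c i) * X i ^ d)) := by
      intro α
      rw [hG, polyG, coeff_sub]
      congr 2
      exact Finset.sum_congr rfl fun p _ => by rw [hg p]
    have hHc : ∀ α, H.coeff α =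
        f.coeff α - MvPolynomial.coeff α (∑ q, C (mu q) * (1 - ∑ i ∈ J q, C (c i) * X i ^ d)) := by
      intro α
      rw [hH, polyG, coeff_sub]
      congr 2
      exact Finset.sum_congr rfl fun q _ => by rw [hh q]
    have hint : ∀ α : Fin n →₀ ℕ, α ≠ 0 → (∀ i, α ≠ Finsupp.single i d) →
        G.coeff α = H.coeff α := by
      intro α hα0 hαd
      rw [hGc, hHc, coeff_comb_int d c I lam α hα0 hαd, coeff_comb_int d c J mu α hα0 hαd]
    have hsummu : ∑ q, mu q = ∑ p, lam p := by
      have : ∑ q, mu q = ∑ q, ∑ p, if I p ⊆ J q then lam p else 0 :=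
        Finset.sum_congr rfl fun q _ => hmu' q
      rw [this, Finset.sum_comm]
      refine Finset.sum_congr rfl fun p _ => ?_
      obtain ⟨q₀, hq₀⟩ := href p
      rw [Finset.sum_eq_single_of_mem q₀ (Finset.mem_univ _)]
      · rw [if_pos hq₀]
      · intro q _ hq
        rw [if_neg (fun hcon => hq (huniq p q q₀ hcon hq₀))]
    have h00 : G.coeff 0 = H.coeff 0 := by
      rw [hGc, hHc, coeff_comb_zero d hd0 c I lam, coeff_comb_zero d hd0 c J mu, hsummu]
    have hsing : ∀ i, G.coeff (Finsupp.single i d) ≤ H.coeff (Finsupp.single i d) := by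
      intro i
      rw [hGc, hHc, coeff_comb_single d hd0 c I lam i, coeff_comb_single d hd0 c J mu i,
        sub_neg_eq_add, sub_neg_eq_add]
      refine add_le_add (le_refl _) ?_
      obtain ⟨q₀, hq₀⟩ := hJcov i
      have step1 : (∑ p, if i ∈ I p then lam p * c i else 0) ≤ mu q₀ * c i := by
        have : mu q₀ * c i = ∑ p, if I p ⊆ J q₀ then lam p * c i else 0 := by
          rw [hmu' q₀, Finset.sum_mul]
          exact Finset.sum_congr rfl fun p _ => by rw [ite_mul, zero_mul]
        rw [this]
        refine Finset.sum_le_sum fun p _ => ?_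
        by_cases hi : i ∈ I p
        · obtain ⟨q', hq'⟩ := href p
          have : q' = q₀ := huniqJ i q' q₀ (hq' hi) hq₀
          rw [if_pos hi, if_pos (this ▸ hq')]
        · rw [if_neg hi]
          by_cases hs : I p ⊆ J q₀
          · rw [if_pos hs]; exact mul_nonneg (hlam p) (hcpos i)
          · rw [if_neg hs]
      have step2 : mu q₀ * c i ≤ ∑ q, if i ∈ J q then mu q * c i else 0 := by
        have hnn : ∀ q ∈ (Finset.univ : Finset (Fin m)),
            0 ≤ if i ∈ J q then mu q * c i else 0 := by
          intro q _
          split_ifs with hs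
          · exact mul_nonneg (hmunn q) (hcpos i)
          · exact le_refl 0
        calc mu q₀ * c i = if i ∈ J q₀ then mu q₀ * c i else 0 := (if_pos hq₀).symm
          _ ≤ ∑ q, if i ∈ J q then mu q * c i else 0 :=
            Finset.single_le_sum hnn (Finset.mem_univ q₀)
      exact le_trans step1 step2
    have hcondO : ∀ α ∈ OmegaSet d H, α ≠ 0 ∧ ∀ i, α ≠ Finsupp.single i d := by
      intro α hα
      have := (mem_pfilter.mp hα).2
      exact ⟨this.2.1, this.2.2⟩
    have hOm : OmegaSet d G = OmegaSet d H := by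
      ext α
      simp only [OmegaSet, mem_pfilter, MvPolynomial.mem_support_iff]
      constructor
      · rintro ⟨hne, hdeg, hα0, hαd⟩
        exact ⟨by rwa [← hint α hα0 hαd], hdeg, hα0, hαd⟩
      · rintro ⟨hne, hdeg, hα0, hαd⟩
        exact ⟨by rwa [hint α hα0 hαd], hdeg, hα0, hαd⟩
    have hcoeO : ∀ α ∈ OmegaSet d H, G.coeff α = H.coeff α := by
      intro α hα
      obtain ⟨h1, h2⟩ := hcondO α hα
      exact hint α h1 h2
    have hDel : DelSet d G = DelSet d H := by
      ext α
      simp only [DelSet, mem_pfilter, hOm]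
      constructor
      · rintro ⟨hα, hsq⟩
        exact ⟨hα, by rwa [← hcoeO α hα]⟩
      · rintro ⟨hα, hsq⟩
        exact ⟨hα, by rwa [hcoeO α hα]⟩
    have hcoeD : ∀ α ∈ DelSet d H, G.coeff α = H.coeff α := fun α hα =>
      hcoeO α (mem_pfilter.mp hα).1
    have hfeas : ∀ z, LwFeas d G z → LwFeas d H z := by
      rintro z ⟨h1, h2, h3⟩
      refine ⟨?_, ?_, ?_⟩
      · rw [← hDel]; exact h1
      · intro i
        rw [← hDel]
        exact le_trans (h2 i) (hsing i)
      · intro α hα hdeg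
        rw [← hcoeD α hα]
        exact h3 α (by rwa [hDel]) hdeg
    have hobj : ∀ z, lwObj d G z = lwObj d H z := by
      intro z
      unfold lwObj
      rw [hDel]
      refine Finset.sum_congr rfl fun α hα => ?_
      rw [hcoeD α (mem_pfilter.mp hα).1]
    have hrho : lwRho d H ≤ lwRho d G := by
      apply sInf_le_sInf
      rintro x ⟨z, hz, rfl⟩
      exact ⟨z, hfeas z hz, by simp [hobj z]⟩
    have heval : MvPolynomial.eval (0 : Fin n → ℝ) G = MvPolynomial.eval (0 : Fin n → ℝ) H := by
      rw [MvPolynomial.eval_zero, MvPolynomial.constantCoeff_eq]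
      exact h00
    rw [lwGp, lwGp, heval]
    exact EReal.sub_le_sub le_rfl hrho
  refine ⟨main, ?_⟩
  apply sSup_le
  rintro x ⟨lam, hlam, rfl⟩
  refine le_trans (main lam hlam) (le_sSup ⟨_, ?_, rfl⟩)
  intro q
  exact Finset.sum_nonneg fun p _ => hlam p
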